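/- Under the assumptions of the previous setup (‖X‖₂ ≤ 1, R a rotation matrix with rows R_xy (first two) and R_z (third), d > 1), the difference between orthographic and perspective projections satisfies ‖p_orth(X) − p_pers(X)‖_∞ ≤ 1/(d − 1). -/
import Mathlib


open Matrix

theorem orth_sub_pers_bound
    (R : Matrix (Fin 3) (Fin 3) ℝ) (hR : R * Rᵀ = 1) (hdet : R.det = 1)
    (X : Fin 3 → ℝ) (hX : Real.sqrt (∑ i, (X i) ^ 2) ≤ 1)
    (Rxy : Matrix (Fin 2) (Fin 3) ℝ) (hRxy : ∀ i j, Rxy i j = R i.castSucc j)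
    (Rz : Fin 3 → ℝ) (hRz : Rz = R 2)
    (d : ℝ) (hd : 1 < d)
    (pOrth pPers : Fin 2 → ℝ)
    (hOrth : pOrth = Rxy.mulVec X)
    (hPers : pPers = fun i => d * (Rxy.mulVec X i) / (d + Rz ⬝ᵥ X)) :
    ∀ i, |pOrth i - pPers i| ≤ 1 / (d - 1) := by
  have hX2 : (∑ i, (X i) ^ 2) ≤ 1 := by
    have h0 : (0:ℝ) ≤ ∑ i, (X i) ^ 2 := Finset.sum_nonneg fun i _ => sq_nonneg _
    nlinarith [Real.sq_sqrt h0, Real.sqrt_nonneg (∑ i, (X i) ^ 2)]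
  have hrow : ∀ i : Fin 3, |R i ⬝ᵥ X| ≤ 1 := by
    intro i
    have hnorm : (∑ j, (R i j) ^ 2) = 1 := by
      have := congrFun (congrFun hR i) i
      simpa [Matrix.mul_apply, Matrix.one_apply, pow_two] using this
    have hcs := Finset.sum_mul_sq_le_sq_mul_sq Finset.univ (R i) X
    rw [hnorm, one_mul] at hcs
    have hsq : (R i ⬝ᵥ X) ^ 2 ≤ 1 :=
      le_trans (by simpa [dotProduct] using hcs) hX2
    exact (sq_le_one_iff_abs_le_one _).mp hsq
  intro i
  set a : ℝ := Rxy.mulVec X i with ha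
  set z : ℝ := Rz ⬝ᵥ X with hz
  have haa : |a| ≤ 1 := by
    have : a = R i.castSucc ⬝ᵥ X := by
      simp [ha, Matrix.mulVec, dotProduct, hRxy]
    rw [this]; exact hrow _
  have hza : |z| ≤ 1 := by rw [hz, hRz]; exact hrow _
  have hz1 : -1 ≤ z := (abs_le.mp hza).1
  have hz2 : z ≤ 1 := (abs_le.mp hza).2
  have hpos : 0 < d + z := by linarith
  have heq : pOrth i - pPers i = a * z / (d + z) := by
    rw [hOrth, hPers]
    field_simp [ha]
    ring
  rw [heq, abs_div, abs_of_pos hpos, abs_mul]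
  rw [div_le_div_iff₀ hpos (by linarith : (0:ℝ) < d - 1)]
  nlinarith [abs_nonneg a, abs_nonneg z, mul_le_one₀ haa (abs_nonneg z) hza]
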